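/- For every configuration M(i,j,U,V) of Minsky's universal Turing machine, the following are equivalent: (i) the machine, started in configuration M(i,j,U,V), halts in finitely many steps; (ii) there exists a positive integer N such that t^N · W(i,j,U,V) = 0 in the algebra A. -/

import Mathlib

noncomputable section

/-- Direction of the head movement of the Turing machine. -/
inductive Dir
  | L
  | R
deriving DecidableEq

/-- The instruction table of Minsky's universal Turing machine: for a state `i` and a color `j`,
`instr i j` is `some (d, q, p)` where `d` is the direction of the head movement, `q` the new
state and `p` the new color of the current cell; it is `none` exactly for the STOP pair
`(4, 3)`. -/
def instr : Fin 7 → Fin 4 → Option (Dir × Fin 7 × Fin 4) := fun i j =>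
  match i.val, j.val with
  | 0, 0 => some (Dir.L, 4, 1)
  | 0, 1 => some (Dir.L, 1, 3)
  | 0, 2 => some (Dir.R, 0, 0)
  | 0, 3 => some (Dir.R, 0, 1)
  | 1, 0 => some (Dir.L, 1, 2)
  | 1, 1 => some (Dir.L, 1, 3)
  | 1, 2 => some (Dir.R, 0, 0)
  | 1, 3 => some (Dir.L, 1, 3)
  | 2, 0 => some (Dir.R, 2, 2)
  | 2, 1 => some (Dir.R, 2, 1)
  | 2, 2 => some (Dir.R, 2, 0)
  | 2, 3 => some (Dir.L, 4, 1)
  | 3, 0 => some (Dir.R, 3, 2)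
  | 3, 1 => some (Dir.R, 3, 1)
  | 3, 2 => some (Dir.R, 3, 0)
  | 3, 3 => some (Dir.L, 4, 0)
  | 4, 0 => some (Dir.L, 5, 2)
  | 4, 1 => some (Dir.L, 4, 1)
  | 4, 2 => some (Dir.L, 4, 0)
  | 4, 3 => none
  | 5, 0 => some (Dir.L, 5, 2)
  | 5, 1 => some (Dir.L, 5, 1)
  | 5, 2 => some (Dir.L, 6, 2)
  | 5, 3 => some (Dir.R, 2, 1)
  | 6, 0 => some (Dir.R, 0, 3)
  | 6, 1 => some (Dir.R, 6, 3)
  | 6, 2 => some (Dir.R, 6, 2)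
  | 6, 3 => some (Dir.R, 3, 1)
  | _, _ => none

/-- A configuration `M(i, j, U, V)` of the machine: the current state `i`, the color `j` of the
current cell, and the lists `U`, `V` of colors of the tape to the left and to the right of the
head. -/
structure Config where
  state : Fin 7
  color : Fin 4
  left : List (Fin 4)
  right : List (Fin 4)

/-- One step of the machine: for a left pair, `M(i,j,U'++[k],V)` passes to
`M(q i j, k, U', p i j :: V)` and `M(i,j,[],V)` passes to `M(q i j, 0, [], p i j :: V)`;
for a right pair, `M(i,j,U,k::V')` passes to `M(q i j, k, U ++ [p i j], V')` and
`M(i,j,U,[])` passes to `M(q i j, 0, U ++ [p i j], [])`. No step is possible from the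
STOP pair `(4,3)`. -/
def step (c : Config) : Option Config :=
  match instr c.state c.color with
  | none => none
  | some (Dir.L, q, p) =>
    match c.left.reverse with
    | [] => some ⟨q, 0, [], p :: c.right⟩
    | k :: U' => some ⟨q, k, U'.reverse, p :: c.right⟩
  | some (Dir.R, q, p) =>
    match c.right with
    | [] => some ⟨q, 0, c.left ++ [p], []⟩
    | k :: V' => some ⟨q, k, c.left ++ [p], V'⟩

/-- Iterating `n` steps of the machine. -/
def stepsFrom : ℕ → Config → Option Config
  | 0, c => some c
  | n + 1, c => (step c).bind (stepsFrom n)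

/-- The machine halts from the configuration `c` if after finitely many steps it reaches a
configuration whose (state, current color) pair is `(4, 3)`. -/
def Halts (c : Config) : Prop :=
  ∃ n c', stepsFrom n c = some c' ∧ c'.state = 4 ∧ c'.color = 3

/-- The alphabet `Φ = {t, a_0, …, a_3, Q_0, …, Q_6, P_0, …, P_3, R}`. -/
inductive Phi
  | t
  | a (k : Fin 4)
  | Q (i : Fin 7)
  | P (j : Fin 4)
  | R
deriving DecidableEq, Fintype

/-- The image in the free algebra of a word over the alphabet `Φ`. -/
def wrd (K : Type*) [Field K] (l : List Phi) : FreeAlgebra K Phi :=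
  (l.map (FreeAlgebra.ι K)).prod

open Phi in
/-- The defining relations of the algebra `A`. -/
inductive ARel (K : Type*) [Field K] : FreeAlgebra K Phi → FreeAlgebra K Phi → Prop
  | rel1 (l : Fin 4) :
      ARel K (wrd K [t, R, a l]) (wrd K [R, t, a l])
  | rel1b (l : Fin 4) :
      ARel K (wrd K [t, a l, R]) (wrd K [a l, R, t])
  | rel2 (k n : Fin 4) :
      ARel K (wrd K [t, a k, a n]) (wrd K [a k, t, a n])
  | rel3 (i : Fin 7) (j : Fin 4) (q : Fin 7) (p : Fin 4) (k : Fin 4)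
      (h : instr i j = some (Dir.L, q, p)) :
      ARel K (wrd K [t, a k, Q i, P j]) (wrd K [Q q, P k, t, a p])
  | rel5 (i : Fin 7) (j : Fin 4) (q : Fin 7) (p : Fin 4)
      (h : instr i j = some (Dir.L, q, p)) :
      ARel K (wrd K [t, R, Q i, P j]) (wrd K [R, Q q, P 0, t, a p])
  | rel4 (i : Fin 7) (j : Fin 4) (q : Fin 7) (p : Fin 4) (l k n : Fin 4)
      (h : instr i j = some (Dir.R, q, p)) :
      ARel K (wrd K [t, a l, Q i, P j, a k, a n]) (wrd K [a l, a p, Q q, P k, t, a n])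
  | rel4r (i : Fin 7) (j : Fin 4) (q : Fin 7) (p : Fin 4) (l k : Fin 4)
      (h : instr i j = some (Dir.R, q, p)) :
      ARel K (wrd K [t, a l, Q i, P j, a k, R]) (wrd K [a l, a p, Q q, P k, R, t])
  | rel4b (i : Fin 7) (j : Fin 4) (q : Fin 7) (p : Fin 4) (k n : Fin 4)
      (h : instr i j = some (Dir.R, q, p)) :
      ARel K (wrd K [t, R, Q i, P j, a k, a n]) (wrd K [R, a p, Q q, P k, t, a n])
  | rel4ar (i : Fin 7) (j : Fin 4) (q : Fin 7) (p : Fin 4) (k : Fin 4)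
      (h : instr i j = some (Dir.R, q, p)) :
      ARel K (wrd K [t, R, Q i, P j, a k, R]) (wrd K [R, a p, Q q, P k, R, t])
  | rel6 (i : Fin 7) (j : Fin 4) (q : Fin 7) (p : Fin 4) (l : Fin 4)
      (h : instr i j = some (Dir.R, q, p)) :
      ARel K (wrd K [t, a l, Q i, P j, R]) (wrd K [a l, a p, Q q, P 0, R, t])
  | rel6b (i : Fin 7) (j : Fin 4) (q : Fin 7) (p : Fin 4)
      (h : instr i j = some (Dir.R, q, p)) :
      ARel K (wrd K [t, R, Q i, P j, R]) (wrd K [R, a p, Q q, P 0, R, t])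
  | rel7 :
      ARel K (wrd K [Q 4, P 3]) 0

/-- The algebra `A`: the quotient of the free associative unital `K`-algebra on `Φ` by the
two-sided ideal generated by the defining relations. -/
abbrev AlgA (K : Type*) [Field K] := RingQuot (ARel K)

/-- The image in `A` of a word over the alphabet `Φ`. -/
def mkw (K : Type*) [Field K] (l : List Phi) : AlgA K :=
  RingQuot.mkAlgHom K (ARel K) (wrd K l)

/-- The image of the letter `t` in `A`. -/
def tEl (K : Type*) [Field K] : AlgA K := mkw K [Phi.t]

/-- The word `R a_{u_1} ⋯ a_{u_k} Q_i P_j a_{v_1} ⋯ a_{v_l} R` associated to a configuration. -/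
def confWord (c : Config) : List Phi :=
  Phi.R :: (c.left.map Phi.a ++ [Phi.Q c.state, Phi.P c.color] ++ c.right.map Phi.a ++ [Phi.R])

/-- The element `W(i, j, U, V)` of the algebra `A` associated to a configuration. -/
def W (K : Type*) [Field K] (c : Config) : AlgA K := mkw K (confWord c)

namespace TMProof

open Relation List

/-- The rewriting rules. -/
inductive Rule : List Phi → List Phi → Prop
  | rel1 (l : Fin 4) : Rule [Phi.t, Phi.R, Phi.a l] [Phi.R, Phi.t, Phi.a l]
  | rel1b (l : Fin 4) : Rule [Phi.t, Phi.a l, Phi.R] [Phi.a l, Phi.R, Phi.t]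
  | rel2 (k n : Fin 4) : Rule [Phi.t, Phi.a k, Phi.a n] [Phi.a k, Phi.t, Phi.a n]
  | rel3 (i : Fin 7) (j : Fin 4) (q : Fin 7) (p : Fin 4) (k : Fin 4)
      (h : instr i j = some (Dir.L, q, p)) :
      Rule [Phi.t, Phi.a k, Phi.Q i, Phi.P j] [Phi.Q q, Phi.P k, Phi.t, Phi.a p]
  | rel5 (i : Fin 7) (j : Fin 4) (q : Fin 7) (p : Fin 4)
      (h : instr i j = some (Dir.L, q, p)) :
      Rule [Phi.t, Phi.R, Phi.Q i, Phi.P j] [Phi.R, Phi.Q q, Phi.P 0, Phi.t, Phi.a p]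
  | rel4 (i : Fin 7) (j : Fin 4) (q : Fin 7) (p : Fin 4) (l k n : Fin 4)
      (h : instr i j = some (Dir.R, q, p)) :
      Rule [Phi.t, Phi.a l, Phi.Q i, Phi.P j, Phi.a k, Phi.a n]
        [Phi.a l, Phi.a p, Phi.Q q, Phi.P k, Phi.t, Phi.a n]
  | rel4r (i : Fin 7) (j : Fin 4) (q : Fin 7) (p : Fin 4) (l k : Fin 4)
      (h : instr i j = some (Dir.R, q, p)) :
      Rule [Phi.t, Phi.a l, Phi.Q i, Phi.P j, Phi.a k, Phi.R]
        [Phi.a l, Phi.a p, Phi.Q q, Phi.P k, Phi.R, Phi.t]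
  | rel4b (i : Fin 7) (j : Fin 4) (q : Fin 7) (p : Fin 4) (k n : Fin 4)
      (h : instr i j = some (Dir.R, q, p)) :
      Rule [Phi.t, Phi.R, Phi.Q i, Phi.P j, Phi.a k, Phi.a n]
        [Phi.R, Phi.a p, Phi.Q q, Phi.P k, Phi.t, Phi.a n]
  | rel4ar (i : Fin 7) (j : Fin 4) (q : Fin 7) (p : Fin 4) (k : Fin 4)
      (h : instr i j = some (Dir.R, q, p)) :
      Rule [Phi.t, Phi.R, Phi.Q i, Phi.P j, Phi.a k, Phi.R]
        [Phi.R, Phi.a p, Phi.Q q, Phi.P k, Phi.R, Phi.t]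
  | rel6 (i : Fin 7) (j : Fin 4) (q : Fin 7) (p : Fin 4) (l : Fin 4)
      (h : instr i j = some (Dir.R, q, p)) :
      Rule [Phi.t, Phi.a l, Phi.Q i, Phi.P j, Phi.R]
        [Phi.a l, Phi.a p, Phi.Q q, Phi.P 0, Phi.R, Phi.t]
  | rel6b (i : Fin 7) (j : Fin 4) (q : Fin 7) (p : Fin 4)
      (h : instr i j = some (Dir.R, q, p)) :
      Rule [Phi.t, Phi.R, Phi.Q i, Phi.P j, Phi.R]
        [Phi.R, Phi.a p, Phi.Q q, Phi.P 0, Phi.R, Phi.t]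

/-- One rewriting step. -/
def Rw (w w' : List Phi) : Prop :=
  ∃ x y l r, Rule l r ∧ w = x ++ l ++ y ∧ w' = x ++ r ++ y

/-- A word containing the factor `Q₄ P₃`. -/
def Bad (w : List Phi) : Prop :=
  ∃ x y, w = x ++ [Phi.Q 4, Phi.P 3] ++ y

lemma Rw.intro' {l r x y w w' : List Phi} (h : Rule l r)
    (hw : w = x ++ l ++ y) (hw' : w' = x ++ r ++ y) : Rw w w' :=
  ⟨x, y, l, r, h, hw, hw'⟩

lemma instr43 : instr 4 3 = none := rfl

/-- Every rule's left side is `t` followed by a nonempty `t`-free word. -/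
lemma Rule.shape {l r : List Phi} (h : Rule l r) :
    ∃ c tl, l = Phi.t :: c :: tl ∧ c ≠ Phi.t ∧ Phi.t ∉ c :: tl := by
  rcases h <;> exact ⟨_, _, rfl, by simp, by simp⟩

/-- No rule's left side contains the factor `Q₄ P₃`. -/
lemma Rule.noQP {l r : List Phi} (h : Rule l r) (x y : List Phi) :
    l ≠ x ++ [Phi.Q 4, Phi.P 3] ++ y := by
  rcases h <;> intro hx <;>
    rcases x with _|⟨c0,_|⟨c1,_|⟨c2,_|⟨c3,_|⟨c4,x⟩⟩⟩⟩⟩ <;> simp_all [instr43] <;>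
    (cases x <;> simp_all)

/-- No rule's left side ends with a `Q`. -/
lemma Rule.lastNoQ {l r : List Phi} (h : Rule l r) (x : List Phi) (i : Fin 7) :
    l ≠ x ++ [Phi.Q i] := by
  intro hx
  have := congrArg List.getLast? hx
  rcases h <;> simp [List.getLast?_concat] at this

end TMProof
namespace TMProof
open Relation List

lemma Rule.det {l1 r1 l2 r2 y1 y2 : List Phi} (h1 : Rule l1 r1) (h2 : Rule l2 r2)
    (e : l1 ++ y1 = l2 ++ y2) : r1 ++ y1 = r2 ++ y2 := by
  rcases h1 <;> rcases h2 <;> simp_all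

lemma overlap_key {l1 r1 l2 r2 m y1 y2 : List Phi} (h1 : Rule l1 r1) (h2 : Rule l2 r2)
    (e : l1 ++ y1 = m ++ (l2 ++ y2)) :
    (m = [] ∧ r1 ++ y1 = r2 ++ y2) ∨ ∃ m', m = l1 ++ m' ∧ y1 = m' ++ (l2 ++ y2) := by
  rcases m with _ | ⟨d, m⟩
  · exact Or.inl ⟨rfl, h1.det h2 (by simpa using e)⟩
  · right
    obtain ⟨c, tl, hl1, -, htl⟩ := h1.shape
    obtain ⟨c2, tl2, hl2, -, -⟩ := h2.shape
    subst hl1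
    rw [cons_append, cons_append] at e
    injection e with e0 e
    rcases List.append_eq_append_iff.mp (show (c :: tl) ++ y1 = m ++ (l2 ++ y2) by simpa using e) with ⟨m', rfl, hy⟩ | ⟨c', hc, hy⟩
    · exact ⟨m', by rw [← e0]; simp, hy⟩
    · rcases c' with _ | ⟨d', c'⟩
      · refine ⟨[], by rw [← e0, hc]; simp, by simpa using hy.symm⟩
      · exfalso
        have hd : d' = Phi.t := by
          rw [hl2] at hy; exact (List.cons.injEq _ _ _ _ ▸ hy).1.symm
        exact htl (hc ▸ List.mem_append_right m (hd ▸ (List.mem_cons_self : d' ∈ d' :: c')))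

lemma Rw.context {w w' : List Phi} (h : Rw w w') (x y : List Phi) :
    Rw (x ++ w ++ y) (x ++ w' ++ y) := by
  obtain ⟨x0, y0, l, r, hr, rfl, rfl⟩ := h
  exact ⟨x ++ x0, y0 ++ y, l, r, hr, by simp, by simp⟩

lemma diamond {w u1 u2 : List Phi} (h1 : Rw w u1) (h2 : Rw w u2) :
    u1 = u2 ∨ ∃ v, Rw u1 v ∧ Rw u2 v := by
  obtain ⟨x1, y1, l1, r1, hr1, rfl, rfl⟩ := h1
  obtain ⟨x2, y2, l2, r2, hr2, e, rfl⟩ := h2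
  rcases List.append_eq_append_iff.mp
      (show x1 ++ (l1 ++ y1) = x2 ++ (l2 ++ y2) by simpa [List.append_assoc] using e) with
    ⟨m, rfl, hm⟩ | ⟨m, rfl, hm⟩
  · rcases overlap_key hr1 hr2 hm with ⟨rfl, hdet⟩ | ⟨m', rfl, rfl⟩
    · left; simp [List.append_assoc, hdet]
    · right
      refine ⟨x1 ++ r1 ++ m' ++ r2 ++ y2,
        Rw.intro' hr2 (x := x1 ++ r1 ++ m') (y := y2) (by simp) (by simp),
        Rw.intro' hr1 (x := x1) (y := m' ++ r2 ++ y2) (by simp) (by simp)⟩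
  · rcases overlap_key hr2 hr1 hm with ⟨rfl, hdet⟩ | ⟨m', rfl, rfl⟩
    · left; simp [List.append_assoc, hdet]
    · right
      refine ⟨x2 ++ r2 ++ m' ++ r1 ++ y1,
        Rw.intro' hr2 (x := x2) (y := m' ++ r1 ++ y1) (by simp) (by simp),
        Rw.intro' hr1 (x := x2 ++ r2 ++ m') (y := y1) (by simp) (by simp)⟩

lemma rw_diamond : ∀ a b c : List Phi, Rw a b → Rw a c →
    ∃ d, ReflGen Rw b d ∧ ReflTransGen Rw c d := by
  intro a b c h1 h2
  rcases diamond h1 h2 with rfl | ⟨v, hv1, hv2⟩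
  · exact ⟨b, ReflGen.refl, ReflTransGen.refl⟩
  · exact ⟨v, ReflGen.single hv1, ReflTransGen.single hv2⟩

lemma Bad.rw {w w' : List Phi} (hb : Bad w) (h : Rw w w') : Bad w' := by
  obtain ⟨xb, yb, hw⟩ := hb
  obtain ⟨x, y, l, r, hr, rfl, rfl⟩ := h
  obtain ⟨c, tl, hl1, -, -⟩ := hr.shape
  rcases List.append_eq_append_iff.mp
      (show xb ++ ([Phi.Q 4, Phi.P 3] ++ yb) = x ++ (l ++ y) by
        simpa [List.append_assoc] using hw.symm) with ⟨m, rfl, hm⟩ | ⟨m, rfl, hm⟩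
  · rcases List.append_eq_append_iff.mp hm with ⟨m', rfl, hy⟩ | ⟨c', hc, hy⟩
    · exact ⟨xb, m' ++ r ++ y, by simp⟩
    · rcases m with _ | ⟨e1, _ | ⟨e2, _ | ⟨e3, m⟩⟩⟩
      · exfalso; rw [hl1] at hy; simp at hc; simp [← hc] at hy
      · exfalso; rw [hl1] at hy; simp at hc; simp [← hc.2] at hy
      · have : c' = [] := by
          have := congrArg List.length hc; simpa using this
        subst this
        simp only [List.append_nil] at hc
        obtain ⟨rfl, rfl⟩ : e1 = Phi.Q 4 ∧ e2 = Phi.P 3 := by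
          simpa using hc.symm
        exact ⟨xb, r ++ y, by simp⟩
      · simp at hc
  · rcases List.append_eq_append_iff.mp hm with ⟨m', rfl, rfl⟩ | ⟨c', hc, hy⟩
    · exact ⟨x ++ r ++ m', yb, by simp⟩
    · rcases List.append_eq_append_iff.mp hy with ⟨a', rfl, hy'⟩ | ⟨d', hd, hy'⟩
      · exact absurd hc (by simpa [List.append_assoc] using hr.noQP m a')
      · rcases c' with _ | ⟨e1, _ | ⟨e2, _ | ⟨e3, c'⟩⟩⟩
        · obtain rfl : [Phi.Q 4, Phi.P 3] = d' := by simpa using hd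
          exact ⟨x ++ r, yb, by simp [hy']⟩
        · exfalso
          obtain ⟨rfl, -⟩ : Phi.Q 4 = e1 ∧ [Phi.P 3] = d' := by simpa using hd
          exact hr.lastNoQ m 4 hc
        · obtain ⟨rfl, rfl, rfl⟩ : Phi.Q 4 = e1 ∧ Phi.P 3 = e2 ∧ [] = d' := by
            simpa using hd
          exact absurd (by simpa using hc) (by simpa using hr.noQP m [])
        · exfalso; simp at hd

end TMProof
namespace TMProof
open Relation List

lemma rtg_context {w w' : List Phi} (h : ReflTransGen Rw w w') (x y : List Phi) :
    ReflTransGen Rw (x ++ w ++ y) (x ++ w' ++ y) := by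
  induction h with
  | refl => exact .refl
  | tail _ h2 ih => exact ih.tail (h2.context x y)

lemma rtg_cons {w w' : List Phi} (s : Phi) (h : ReflTransGen Rw w w') :
    ReflTransGen Rw (s :: w) (s :: w') := by
  simpa using rtg_context h [s] []

lemma moveA (U : List (Fin 4)) (u : Fin 4) (z : List Phi) :
    ReflTransGen Rw (Phi.t :: (U.map Phi.a ++ Phi.a u :: z))
      (U.map Phi.a ++ Phi.t :: Phi.a u :: z) := by
  induction U generalizing z with
  | nil => exact .refl
  | cons u1 U ih =>
    rcases U with _ | ⟨u2, U⟩
    · exact ReflTransGen.single (Rw.intro' (Rule.rel2 u1 u) (x := []) (y := z) rfl rfl)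
    · refine ReflTransGen.head (Rw.intro' (Rule.rel2 u1 u2) (x := [])
        (y := U.map Phi.a ++ Phi.a u :: z) (by simp) rfl) ?_
      simpa using rtg_cons (Phi.a u1) (ih z)

lemma moveRight (V : List (Fin 4)) (v : Fin 4) (z : List Phi) :
    ReflTransGen Rw (Phi.t :: Phi.a v :: (V.map Phi.a ++ Phi.R :: z))
      (Phi.a v :: V.map Phi.a ++ Phi.R :: Phi.t :: z) := by
  induction V generalizing v with
  | nil => exact ReflTransGen.single (Rw.intro' (Rule.rel1b v) (x := []) (y := z) rfl rfl)
  | cons v2 V ih =>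
    refine ReflTransGen.head (Rw.intro' (Rule.rel2 v v2) (x := [])
      (y := V.map Phi.a ++ Phi.R :: z) (by simp) rfl) ?_
    simpa using rtg_cons (Phi.a v) (ih v2)

lemma reachQ (U : List (Fin 4)) (u : Fin 4) (z : List Phi) :
    ReflTransGen Rw (Phi.t :: Phi.R :: (U.map Phi.a ++ Phi.a u :: z))
      (Phi.R :: U.map Phi.a ++ Phi.t :: Phi.a u :: z) := by
  rcases U with _ | ⟨u1, U⟩
  · exact ReflTransGen.single (Rw.intro' (Rule.rel1 u) (x := []) (y := z) rfl rfl)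
  · refine ReflTransGen.head (Rw.intro' (Rule.rel1 u1) (x := [])
      (y := U.map Phi.a ++ Phi.a u :: z) (by simp) rfl) ?_
    simpa using rtg_cons Phi.R (moveA (u1 :: U) u z)

end TMProof
namespace TMProof
open Relation List

lemma stepSim {c c' : Config} (h : step c = some c') :
    ReflTransGen Rw (Phi.t :: confWord c) (confWord c' ++ [Phi.t]) := by
  obtain ⟨i, j, U, V⟩ := c
  rcases hins : instr i j with _ | ⟨d, q, p⟩
  · rw [step] at h; simp [hins] at h
  · cases d
    · -- L direction
      rw [step] at h
      simp only [hins] at h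
      rcases hU : U.reverse with _ | ⟨k, Ur⟩
      · rw [hU] at h
        injection h with h; subst h
        obtain rfl : U = [] := List.reverse_eq_nil_iff.mp hU
        simp only [confWord, List.map_nil, List.nil_append, List.map_cons, List.cons_append,
          List.append_assoc]
        refine ReflTransGen.head (Rw.intro' (Rule.rel5 i j q p hins) (x := [])
          (y := V.map Phi.a ++ [Phi.R]) (by simp) rfl) ?_
        simpa using rtg_context (moveRight V p []) [Phi.R, Phi.Q q, Phi.P 0] []
      · rw [hU] at h
        injection h with h; subst h
        obtain rfl : U = Ur.reverse ++ [k] := by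
          have := congrArg List.reverse hU; simpa using this
        have s1 := reachQ Ur.reverse k
          (Phi.Q i :: Phi.P j :: (V.map Phi.a ++ [Phi.R]))
        have s2 : Rw
            (Phi.R :: Ur.reverse.map Phi.a ++ Phi.t :: Phi.a k ::
              (Phi.Q i :: Phi.P j :: (V.map Phi.a ++ [Phi.R])))
            ((Phi.R :: Ur.reverse.map Phi.a) ++
              ([Phi.Q q, Phi.P k, Phi.t, Phi.a p] ++ (V.map Phi.a ++ [Phi.R]))) :=
          Rw.intro' (Rule.rel3 i j q p k hins) (x := Phi.R :: Ur.reverse.map Phi.a)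
            (y := V.map Phi.a ++ [Phi.R]) (by simp) (by simp)
        have s3 := rtg_context (moveRight V p [])
          (Phi.R :: Ur.reverse.map Phi.a ++ [Phi.Q q, Phi.P k]) []
        exact ((show ReflTransGen Rw _ _ by simpa [confWord] using s1).trans
          (ReflTransGen.single s2)).trans (by simpa [confWord] using s3)
    · -- R direction
      rw [step] at h
      simp only [hins] at h
      rcases V with _ | ⟨k, V2⟩
      · injection h with h; subst h
        rcases List.eq_nil_or_concat U with rfl | ⟨U', ul, rfl⟩
        · exact ReflTransGen.single (Rw.intro' (Rule.rel6b i j q p hins)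
            (x := []) (y := []) (by simp [confWord]) (by simpa [confWord] using ReflTransGen.refl))
        · have s1 := reachQ U' ul [Phi.Q i, Phi.P j, Phi.R]
          have s2 : Rw
              (Phi.R :: U'.map Phi.a ++ Phi.t :: Phi.a ul :: [Phi.Q i, Phi.P j, Phi.R])
              ((Phi.R :: U'.map Phi.a) ++
                ([Phi.a ul, Phi.a p, Phi.Q q, Phi.P 0, Phi.R, Phi.t] ++ [])) :=
            Rw.intro' (Rule.rel6 i j q p ul hins) (x := Phi.R :: U'.map Phi.a)
              (y := []) (by simp) (by simp)
          exact (show ReflTransGen Rw _ _ by simpa [confWord] using s1).trans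
            ((ReflTransGen.single s2).trans (by simpa [confWord] using ReflTransGen.refl))
      · injection h with h; subst h
        rcases V2 with _ | ⟨n, V3⟩
        · rcases List.eq_nil_or_concat U with rfl | ⟨U', ul, rfl⟩
          · exact ReflTransGen.single (Rw.intro' (Rule.rel4ar i j q p k hins)
              (x := []) (y := []) (by simp [confWord]) (by simpa [confWord] using ReflTransGen.refl))
          · have s1 := reachQ U' ul [Phi.Q i, Phi.P j, Phi.a k, Phi.R]
            have s2 : Rw
                (Phi.R :: U'.map Phi.a ++ Phi.t :: Phi.a ul ::
                  [Phi.Q i, Phi.P j, Phi.a k, Phi.R])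
                ((Phi.R :: U'.map Phi.a) ++
                  ([Phi.a ul, Phi.a p, Phi.Q q, Phi.P k, Phi.R, Phi.t] ++ [])) :=
              Rw.intro' (Rule.rel4r i j q p ul k hins) (x := Phi.R :: U'.map Phi.a)
                (y := []) (by simp) (by simp)
            exact (show ReflTransGen Rw _ _ by simpa [confWord] using s1).trans
              ((ReflTransGen.single s2).trans (by simpa [confWord] using ReflTransGen.refl))
        · rcases List.eq_nil_or_concat U with rfl | ⟨U', ul, rfl⟩
          · refine ReflTransGen.head (Rw.intro' (Rule.rel4b i j q p k n hins) (x := [])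
              (y := V3.map Phi.a ++ [Phi.R]) (by simp [confWord]) rfl) ?_
            simpa [confWord] using rtg_context (moveRight V3 n [])
              [Phi.R, Phi.a p, Phi.Q q, Phi.P k] []
          · have s1 := reachQ U' ul
              (Phi.Q i :: Phi.P j :: Phi.a k :: Phi.a n :: (V3.map Phi.a ++ [Phi.R]))
            have s2 : Rw
                (Phi.R :: U'.map Phi.a ++ Phi.t :: Phi.a ul ::
                  (Phi.Q i :: Phi.P j :: Phi.a k :: Phi.a n :: (V3.map Phi.a ++ [Phi.R])))
                ((Phi.R :: U'.map Phi.a) ++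
                  ([Phi.a ul, Phi.a p, Phi.Q q, Phi.P k, Phi.t, Phi.a n] ++
                    (V3.map Phi.a ++ [Phi.R]))) :=
              Rw.intro' (Rule.rel4 i j q p ul k n hins) (x := Phi.R :: U'.map Phi.a)
                (y := V3.map Phi.a ++ [Phi.R]) (by simp) (by simp)
            have s3 := rtg_context (moveRight V3 n [])
              (Phi.R :: U'.map Phi.a ++ [Phi.a ul, Phi.a p, Phi.Q q, Phi.P k]) []
            exact ((show ReflTransGen Rw _ _ by simpa [confWord] using s1).trans
              (ReflTransGen.single s2)).trans (by simpa [confWord] using s3)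

end TMProof
namespace TMProof
open Relation List

lemma multiStep {n : ℕ} {c c' : Config} (h : stepsFrom n c = some c') (z : List Phi) :
    ReflTransGen Rw (List.replicate n Phi.t ++ confWord c ++ z)
      (confWord c' ++ List.replicate n Phi.t ++ z) := by
  induction n generalizing c z with
  | zero =>
    rw [stepsFrom] at h; injection h with h; subst h
    simp only [List.replicate_zero, List.nil_append, List.append_nil]
    exact .refl
  | succ n ih =>
    rw [stepsFrom] at h
    rcases hc : step c with _ | c1
    · rw [hc] at h; simp at h
    · rw [hc] at h; simp only [Option.bind_some, Option.bind_some] at h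
      have h1 := rtg_context (stepSim hc) (List.replicate n Phi.t) z
      have h2 := ih (c := c1) h (z := Phi.t :: z)
      refine ReflTransGen.trans (show ReflTransGen Rw _ _ by
        simpa [List.replicate_succ', List.append_assoc] using h1) ?_
      refine ReflTransGen.trans (show ReflTransGen Rw _ _ by
        simpa [List.append_assoc] using h2) ?_
      simp only [List.replicate_succ', List.append_assoc]
      exact .refl

lemma instr_none_iff : ∀ (i : Fin 7) (j : Fin 4), instr i j = none ↔ i = 4 ∧ j = 3 := by
  decide

lemma step_isSome {c : Config} (h : instr c.state c.color ≠ none) : (step c).isSome := by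
  rw [step]
  rcases hins : instr c.state c.color with _ | ⟨d, q, p⟩
  · exact absurd hins h
  · cases d
    · rcases c.left.reverse with _ | ⟨k, U⟩ <;> simp
    · rcases c.right with _ | ⟨k, V⟩ <;> simp

lemma stepsFrom_succ' (n : ℕ) (c : Config) :
    stepsFrom (n + 1) c = (stepsFrom n c).bind step := by
  induction n generalizing c with
  | zero => rcases hc : step c with _ | c1 <;> simp [stepsFrom, hc]
  | succ n ih =>
    rw [stepsFrom, stepsFrom]
    cases hc : step c with
    | none => simp
    | some c1 => simp only [Option.bind_some, Option.bind_some]; exact ih c1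

lemma noHalt_run {c : Config} (hna : ¬ Halts c) (n : ℕ) :
    ∃ cn, stepsFrom n c = some cn ∧ ¬(cn.state = 4 ∧ cn.color = 3) := by
  induction n with
  | zero =>
    refine ⟨c, rfl, fun hh => hna ⟨0, c, rfl, hh.1, hh.2⟩⟩
  | succ n ih =>
    obtain ⟨cn, hsn, hstop⟩ := ih
    have hi : instr cn.state cn.color ≠ none := fun hn =>
      hstop ((instr_none_iff _ _).mp hn)
    obtain ⟨cn1, hcn1⟩ := Option.isSome_iff_exists.mp (step_isSome hi)
    have hs : stepsFrom (n + 1) c = some cn1 := by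
      rw [stepsFrom_succ', hsn, Option.bind_some, hcn1]
    exact ⟨cn1, hs, fun hh => hna ⟨n + 1, cn1, hs, hh.1, hh.2⟩⟩

lemma t_not_mem_confWord (c : Config) : Phi.t ∉ confWord c := by
  simp [confWord]

lemma nf_no_redex {c : Config} (N : ℕ) {u : List Phi} :
    ¬ Rw (confWord c ++ List.replicate N Phi.t) u := by
  rintro ⟨x, y, l, r, hr, hw, -⟩
  obtain ⟨d, tl, rfl, hd, -⟩ := hr.shape
  rcases List.append_eq_append_iff.mp
      (show confWord c ++ List.replicate N Phi.t = x ++ (Phi.t :: d :: tl ++ y) by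
        simpa [List.append_assoc] using hw) with ⟨m, hm, hm2⟩ | ⟨m, hm, hm2⟩
  · have : d ∈ List.replicate N Phi.t := by rw [hm2]; simp
    exact hd (List.eq_of_mem_replicate this)
  · rcases m with _ | ⟨e, m⟩
    · have : d ∈ List.replicate N Phi.t := by
        rw [← List.nil_append (List.replicate N Phi.t), ← hm2]; simp
      exact hd (List.eq_of_mem_replicate this)
    · have he : e = Phi.t := by
        have := congrArg List.head? hm2
        simpa using this.symm
      subst he
      exact t_not_mem_confWord c (by rw [hm]; simp)

end TMProof
namespace TMProof
open Relation List

lemma nf_not_bad {c : Config} (hstop : ¬(c.state = 4 ∧ c.color = 3)) (N : ℕ) :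
    ¬ Bad (confWord c ++ List.replicate N Phi.t) := by
  rintro ⟨x, y, hw⟩
  have hQ : Phi.Q 4 ∈ confWord c ++ List.replicate N Phi.t := by rw [hw]; simp
  have hP : Phi.P 3 ∈ confWord c ++ List.replicate N Phi.t := by rw [hw]; simp
  simp only [confWord, List.mem_append, List.mem_cons, List.mem_map, List.mem_replicate,
    List.mem_singleton] at hQ hP
  have h1 : c.state = 4 := by
    rcases hQ with (h | h) | h <;> simp_all
  have h2 : c.color = 3 := by
    rcases hP with (h | h) | h <;> simp_all
  exact hstop ⟨h1, h2⟩

lemma Bad.rtg {w w' : List Phi} (hb : Bad w) (h : ReflTransGen Rw w w') : Bad w' := by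
  induction h with
  | refl => exact hb
  | tail _ h2 ih => exact ih.rw h2

lemma rtg_eqvGen {w w' : List Phi} (h : ReflTransGen Rw w w') : EqvGen Rw w w' := by
  induction h with
  | refl => exact EqvGen.refl _
  | tail _ h2 ih => exact EqvGen.trans _ _ _ ih (EqvGen.rel _ _ h2)

lemma eqvGen_join {w w' : List Phi} (h : EqvGen Rw w w') :
    Join (ReflTransGen Rw) w w' :=
  ((equivalence_join_reflTransGen rw_diamond).eqvGen_iff).mp
    (Relation.EqvGen.mono (r := Rw) (p := Join (ReflTransGen Rw)) (fun _ b hab => ⟨b, ReflTransGen.single hab, ReflTransGen.refl⟩) _ _ h)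

theorem not_bad_reachable {c : Config} (hna : ¬ Halts c) (N : ℕ) {b : List Phi}
    (hb : Bad b) : ¬ EqvGen Rw (List.replicate N Phi.t ++ confWord c) b := by
  intro he
  obtain ⟨cN, hsN, hstopN⟩ := noHalt_run hna N
  have hreach := multiStep hsN []
  obtain ⟨u, hu1, hu2⟩ := eqvGen_join he
  have hbu : Bad u := hb.rtg hu2
  have he2 : EqvGen Rw u (confWord cN ++ List.replicate N Phi.t) := by
    refine EqvGen.trans _ _ _ (EqvGen.symm _ _ (rtg_eqvGen hu1)) (rtg_eqvGen ?_)
    simpa using hreach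
  obtain ⟨v, hv1, hv2⟩ := eqvGen_join he2
  rcases hv2.cases_head with rfl | ⟨u', hstep, -⟩
  · exact nf_not_bad hstopN N (hbu.rtg hv1)
  · exact nf_no_redex N hstep

end TMProof
namespace TMProof
open Relation List

variable (K : Type*) [Field K]

lemma mkw_append (u v : List Phi) : mkw K (u ++ v) = mkw K u * mkw K v := by
  simp [mkw, wrd, List.map_append, List.prod_append, map_mul]

lemma mkw_rule {l r : List Phi} (h : Rule l r) : mkw K l = mkw K r := by
  cases h with
  | rel1 l => exact RingQuot.mkAlgHom_rel K (ARel.rel1 l)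
  | rel1b l => exact RingQuot.mkAlgHom_rel K (ARel.rel1b l)
  | rel2 k n => exact RingQuot.mkAlgHom_rel K (ARel.rel2 k n)
  | rel3 i j q p k h => exact RingQuot.mkAlgHom_rel K (ARel.rel3 i j q p k h)
  | rel5 i j q p h => exact RingQuot.mkAlgHom_rel K (ARel.rel5 i j q p h)
  | rel4 i j q p l k n h => exact RingQuot.mkAlgHom_rel K (ARel.rel4 i j q p l k n h)
  | rel4r i j q p l k h => exact RingQuot.mkAlgHom_rel K (ARel.rel4r i j q p l k h)
  | rel4b i j q p k n h => exact RingQuot.mkAlgHom_rel K (ARel.rel4b i j q p k n h)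
  | rel4ar i j q p k h => exact RingQuot.mkAlgHom_rel K (ARel.rel4ar i j q p k h)
  | rel6 i j q p l h => exact RingQuot.mkAlgHom_rel K (ARel.rel6 i j q p l h)
  | rel6b i j q p h => exact RingQuot.mkAlgHom_rel K (ARel.rel6b i j q p h)

lemma mkw_rw {w w' : List Phi} (h : Rw w w') : mkw K w = mkw K w' := by
  obtain ⟨x, y, l, r, hr, rfl, rfl⟩ := h
  simp [mkw_append, mkw_rule K hr]

lemma mkw_rtg {w w' : List Phi} (h : ReflTransGen Rw w w') : mkw K w = mkw K w' := by
  induction h with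
  | refl => rfl
  | tail _ h2 ih => exact ih.trans (mkw_rw K h2)

lemma mkw_qp_zero : mkw K [Phi.Q 4, Phi.P 3] = 0 := by
  have := RingQuot.mkAlgHom_rel K (ARel.rel7 (K := K))
  simpa [mkw] using this

lemma mkw_bad_zero {w : List Phi} (h : Bad w) : mkw K w = 0 := by
  obtain ⟨x, y, rfl⟩ := h
  rw [show x ++ [Phi.Q 4, Phi.P 3] ++ y = x ++ ([Phi.Q 4, Phi.P 3] ++ y) from by simp,
    mkw_append, mkw_append, mkw_qp_zero, zero_mul, mul_zero]

lemma tEl_pow (n : ℕ) : tEl K ^ n = mkw K (List.replicate n Phi.t) := by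
  induction n with
  | zero => simp [mkw, wrd]
  | succ n ih =>
    rw [List.replicate_succ,
      show (Phi.t :: List.replicate n Phi.t) = [Phi.t] ++ List.replicate n Phi.t from rfl,
      mkw_append, ← ih, pow_succ']
    rfl

lemma tN_W (N : ℕ) (c : Config) :
    tEl K ^ N * W K c = mkw K (List.replicate N Phi.t ++ confWord c) := by
  rw [mkw_append, tEl_pow]; rfl

theorem halts_forward {c : Config} (hc : Halts c) :
    ∃ N : ℕ, 0 < N ∧ tEl K ^ N * W K c = 0 := by
  obtain ⟨n, c', hs, h4, h3⟩ := hc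
  refine ⟨n + 1, Nat.succ_pos n, ?_⟩
  have h0 : mkw K (confWord c') = 0 :=
    mkw_bad_zero K ⟨[Phi.R] ++ c'.left.map Phi.a, c'.right.map Phi.a ++ [Phi.R],
      by simp [confWord, h4, h3]⟩
  have hz : tEl K ^ n * W K c = 0 := by
    rw [tN_W, mkw_rtg K (show ReflTransGen Rw _ _ by simpa using multiStep hs []),
      mkw_append, h0, zero_mul]
  rw [pow_succ', mul_assoc, hz, mul_zero]

/-! ### The representation used for the converse direction -/

/-- Classes of words under the rewriting congruence. -/
abbrev Qw : Type := Quot Rw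

lemma rw_cons {s : Phi} {w w' : List Phi} (h : Rw w w') : Rw (s :: w) (s :: w') := by
  simpa using h.context [s] []

def cns (s : Phi) : Qw → Qw := Quot.map (s :: ·) (fun _ _ h => rw_cons h)

def badSet : Set Qw := {q | ∃ b, Bad b ∧ q = Quot.mk Rw b}

abbrev Vsp := Qw →₀ K

def badSub : Submodule K (Vsp K) := Finsupp.supported K K badSet

abbrev Vq := Vsp K ⧸ badSub K

lemma cns_maps (s : Phi) :
    badSub K ≤ (badSub K).comap (Finsupp.lmapDomain K K (cns s)) := by
  classical
  intro v hv
  simp only [Submodule.mem_comap, badSub, Finsupp.mem_supported, Finsupp.lmapDomain_apply] at hv ⊢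
  refine subset_trans (subset_trans (Finset.coe_subset.mpr Finsupp.mapDomain_support)
    (subset_of_eq (Finset.coe_image))) ?_
  rintro q ⟨q0, hq0, rfl⟩
  obtain ⟨b, hb, rfl⟩ := hv hq0
  obtain ⟨xb, yb, rfl⟩ := hb
  exact ⟨s :: (xb ++ [Phi.Q 4, Phi.P 3] ++ yb), ⟨s :: xb, yb, by simp⟩, rfl⟩

def act (s : Phi) : Vq K →ₗ[K] Vq K :=
  Submodule.mapQ _ _ (Finsupp.lmapDomain K K (cns s)) (cns_maps K s)

def em (w : List Phi) : Vq K :=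
  Submodule.Quotient.mk (Finsupp.single (Quot.mk Rw w) (1 : K))

lemma act_em (s : Phi) (w : List Phi) : act K s (em K w) = em K (s :: w) := by
  simp only [act, em, Submodule.mapQ_apply, Finsupp.lmapDomain_apply, Finsupp.mapDomain_single]
  rfl

def phi : FreeAlgebra K Phi →ₐ[K] Module.End K (Vq K) := FreeAlgebra.lift K (act K)

lemma phi_wrd (w v : List Phi) : phi K (wrd K w) (em K v) = em K (w ++ v) := by
  induction w generalizing v with
  | nil => simp [wrd, phi]
  | cons s w ih =>
    have hw : wrd K (s :: w) = FreeAlgebra.ι K s * wrd K w := by simp [wrd]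
    rw [hw, map_mul, Module.End.mul_apply, ih, phi, FreeAlgebra.lift_ι_apply, act_em]
    rfl

lemma em_ext {f g : Module.End K (Vq K)} (h : ∀ w, f (em K w) = g (em K w)) : f = g := by
  apply Submodule.linearMap_qext
  refine Finsupp.lhom_ext fun a b => ?_
  induction a using Quot.ind with
  | _ w =>
    have hs : (Finsupp.single (Quot.mk Rw w) b : Vsp K)
        = b • Finsupp.single (Quot.mk Rw w) (1 : K) := by
      rw [Finsupp.smul_single, smul_eq_mul, mul_one]
    simp only [LinearMap.comp_apply, hs, map_smul]
    have := h w
    simp only [em] at this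
    simpa using congrArg (b • ·) this

lemma phi_rule {l r : List Phi} (h : Rule l r) :
    phi K (wrd K l) = phi K (wrd K r) := by
  refine em_ext K fun w => ?_
  rw [phi_wrd, phi_wrd]
  unfold em
  have : Quot.mk Rw (l ++ w) = Quot.mk Rw (r ++ w) :=
    Quot.sound ⟨[], w, l, r, h, by simp, by simp⟩
  rw [this]

lemma phi_rel : ∀ ⦃x y : FreeAlgebra K Phi⦄, ARel K x y → phi K x = phi K y := by
  intro x y h
  cases h with
  | rel1 l => exact phi_rule K (Rule.rel1 l)
  | rel1b l => exact phi_rule K (Rule.rel1b l)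
  | rel2 k n => exact phi_rule K (Rule.rel2 k n)
  | rel3 i j q p k h => exact phi_rule K (Rule.rel3 i j q p k h)
  | rel5 i j q p h => exact phi_rule K (Rule.rel5 i j q p h)
  | rel4 i j q p l k n h => exact phi_rule K (Rule.rel4 i j q p l k n h)
  | rel4r i j q p l k h => exact phi_rule K (Rule.rel4r i j q p l k h)
  | rel4b i j q p k n h => exact phi_rule K (Rule.rel4b i j q p k n h)
  | rel4ar i j q p k h => exact phi_rule K (Rule.rel4ar i j q p k h)
  | rel6 i j q p l h => exact phi_rule K (Rule.rel6 i j q p l h)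
  | rel6b i j q p h => exact phi_rule K (Rule.rel6b i j q p h)
  | rel7 =>
    rw [map_zero]
    refine em_ext K (g := 0) fun w => ?_
    rw [phi_wrd]
    show em K _ = 0
    rw [em, Submodule.Quotient.mk_eq_zero]
    rw [badSub, Finsupp.mem_supported]
    intro q hq
    simp only [Finsupp.support_single_ne_zero _ (one_ne_zero : (1 : K) ≠ 0), Finset.coe_singleton,
      Set.mem_singleton_iff] at hq
    subst hq
    exact ⟨Phi.Q 4 :: Phi.P 3 :: w, ⟨[], w, rfl⟩, rfl⟩

def psi : AlgA K →ₐ[K] Module.End K (Vq K) :=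
  RingQuot.liftAlgHom K ⟨phi K, phi_rel K⟩

lemma mkw_zero_bad {w : List Phi} (h : mkw K w = 0) :
    ∃ b, Bad b ∧ EqvGen Rw w b := by
  have h2 : phi K (wrd K w) = 0 := by
    have h1 := congrArg (psi K) h
    rw [map_zero] at h1
    rw [mkw] at h
    rw [← RingQuot.liftAlgHom_mkAlgHom_apply K (phi K) (phi_rel K) (wrd K w)]
    exact h1
  have h3 : em K w = 0 := by
    have := congrArg (fun f : Module.End K (Vq K) => f (em K [])) h2
    simpa [phi_wrd] using this
  have h4 : (Finsupp.single (Quot.mk Rw w) (1 : K)) ∈ badSub K := by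
    rwa [em, Submodule.Quotient.mk_eq_zero] at h3
  have h5 : Quot.mk Rw w ∈ badSet := by
    apply (Finsupp.mem_supported K _).mp h4
    simp [Finsupp.support_single_ne_zero _ (one_ne_zero : (1 : K) ≠ 0)]
  obtain ⟨b, hb, hq⟩ := h5
  exact ⟨b, hb, Quot.eq.mp hq⟩

end TMProof

/-- The machine started in the configuration `M(i,j,U,V)` halts in finitely
many steps if and only if there is a positive integer `N` with `t^N · W(i,j,U,V) = 0` in `A`. -/
theorem halts_iff_tN_mul_W_eq_zero (K : Type*) [Field K] (c : Config) :
    Halts c ↔ ∃ N : ℕ, 0 < N ∧ tEl K ^ N * W K c = 0 := by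
  constructor
  · exact TMProof.halts_forward K
  · rintro ⟨N, -, h0⟩
    by_contra hna
    obtain ⟨b, hb, he⟩ := TMProof.mkw_zero_bad K ((TMProof.tN_W K N c).symm.trans h0)
    exact TMProof.not_bad_reachable hna N hb he
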